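/- Let (E, ≤, ε) be a nonempty heap with pieces in P and concurrency relation 𝒞, let α be a minimal element of E, and let F be the subheap of E on the subset E \ {α}. Suppose that F is ranked, that every minimal balanced subinterval of E is ranked, and that the concurrency subgraph of E contains no circuits. If β, γ ∈ F lie in the same connected component of the poset F and both α < β and α < γ are covering relations in E, then ρ(β) = ρ(γ) for every rank function ρ of F. -/

import Mathlib

/-- `ρ` is a rank function for the poset `E`:
it increases by exactly 1 along covering relations. -/
def IsRankFunction {E : Type*} [PartialOrder E] (ρ : E → ℤ) : Prop :=
  ∀ a b : E, a ⋖ b → ρ b = ρ a + 1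

/-- A poset is ranked if it admits a rank function. -/
def Ranked (E : Type*) [PartialOrder E] : Prop :=
  ∃ ρ : E → ℤ, IsRankFunction ρ

/-- Two elements lie in the same connected component of the poset: the
equivalence relation generated by the covering relation. -/
def SameComponent {E : Type*} [PartialOrder E] (a b : E) : Prop :=
  Relation.EqvGen (fun x y : E => x ⋖ y) a b

/-- The heap axioms for a labelling `ε : E → P` of a poset `E` with
concurrency relation `C` on the pieces `P`. -/
def IsHeap {E P : Type*} [PartialOrder E] (C : P → P → Prop) (ε : E → P) : Prop :=
  (∀ α β : E, C (ε α) (ε β) → α ≤ β ∨ β ≤ α) ∧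
  (∀ α β : E, α ≤ β ↔ Relation.TransGen (fun x y : E => x ≤ y ∧ C (ε x) (ε y)) α β)

/-- `[a, b]` is a minimal balanced subinterval: `a ≠ b`, `ε a = ε b`, and the
only elements of `[a, b]` with label `ε a` are `a` and `b`. -/
def MinBalanced {E P : Type*} [PartialOrder E] (ε : E → P) (a b : E) : Prop :=
  a < b ∧ ε a = ε b ∧ ∀ c ∈ Set.Icc a b, ε c = ε a → c = a ∨ c = b

/-- The set `S_{[a,b]}` of elements of `[a, b]` whose label is distinct from,
but concurrent with, the label of `a`. -/
def intervalS {E P : Type*} [PartialOrder E] (C : P → P → Prop) (ε : E → P)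
    (a b : E) : Set E :=
  {c | c ∈ Set.Icc a b ∧ ε c ≠ ε a ∧ C (ε a) (ε c)}

/-- The concurrency subgraph of the heap (the simple graph on the labels
occurring in `E`, with distinct labels adjacent iff concurrent) is acyclic. -/
def NoCircuits {E P : Type*} [PartialOrder E] (C : P → P → Prop) (ε : E → P) : Prop :=
  (SimpleGraph.fromRel (fun v w : Set.range ε => C v.1 w.1)).IsAcyclic

section Aux

variable {E P : Type*} [PartialOrder E]

/-- In a heap, a covering relation forces the labels to be concurrent. -/
private lemma aux_cov_concur (C : P → P → Prop) (ε : E → P)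
    (hheap : IsHeap C ε) {u v : E} (h : u ⋖ v) : C (ε u) (ε v) := by
  have ht : Relation.TransGen (fun x y : E => x ≤ y ∧ C (ε x) (ε y)) u v :=
    (hheap.2 u v).mp h.le
  refine Relation.TransGen.head_induction_on
    (motive := fun a _ => a = u → C (ε u) (ε v)) ht ?_ ?_ rfl
  · rintro a ha rfl
    exact ha.2
  · rintro a c hac htc ih rfl
    rcases eq_or_ne c v with rfl | hcv
    · exact hac.2
    · have hcle : c ≤ v := (hheap.2 c v).mpr htc
      rcases eq_or_ne a c with rfl | huc
      · exact ih rfl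
      · exact absurd (lt_of_le_of_ne hcle hcv) (h.2 (lt_of_le_of_ne hac.1 huc))

/-- In a finite poset, `a < b` gives a saturated chain of covers from `a` to `b`. -/
private lemma aux_covChain [Finite E] :
    ∀ a b : E, a < b → Relation.TransGen (fun x y : E => x ⋖ y) a b := by
  have _i : WellFoundedGT E := Finite.to_wellFoundedGT
  have _i2 : WellFoundedLT E := Finite.to_wellFoundedLT
  have wfgt : WellFounded ((· > ·) : E → E → Prop) := _i.wf
  have wflt : WellFounded ((· < ·) : E → E → Prop) := _i2.wf
  intro a b
  refine wfgt.induction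
    (C := fun a => a < b → Relation.TransGen (fun x y : E => x ⋖ y) a b) a ?_
  intro x ih hxb
  obtain ⟨c, hc, hmin⟩ := wflt.has_min {c | x < c ∧ c ≤ b} ⟨b, hxb, le_refl b⟩
  have hcov : x ⋖ c :=
    ⟨hc.1, fun d hxd hdc => hmin d ⟨hxd, le_of_lt (lt_of_lt_of_le hdc hc.2)⟩ hdc⟩
  rcases eq_or_lt_of_le hc.2 with rfl | hcb
  · exact Relation.TransGen.single hcov
  · exact Relation.TransGen.head hcov (ih c hc.1 hcb)

end Aux

/-- Lemma 2.2.1: let E be a nonempty heap with acyclic concurrency subgraph,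
α a minimal element of E, and F the subheap on E \ {α} (whose order, given by
the partial order instF, is the transitive closure of the subheap relation).
If F is ranked and every minimal balanced subinterval of E is ranked, and
β, γ ∈ F lie in the same connected component of F with α < β and α < γ
covering relations in E, then ρ(β) = ρ(γ) for every rank function ρ of F. -/
theorem rank_eq_of_covers_of_sameComponent {E P : Type*} [PartialOrder E]
    [Finite E] [Nonempty E] (C : P → P → Prop) (hrefl : Reflexive C)
    (hsymm : Symmetric C) (ε : E → P) (hheap : IsHeap C ε)
    (hacyclic : NoCircuits C ε)
    (α : E) (hαmin : ∀ x : E, x ≤ α → x = α)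
    (instF : PartialOrder {x : E // x ≠ α})
    (hFle : ∀ x y : {x : E // x ≠ α},
      instF.le x y ↔ Relation.TransGen
        (fun u v : {x : E // x ≠ α} => (u : E) ≤ (v : E) ∧ C (ε u) (ε v)) x y)
    (hFranked : @Ranked _ instF)
    (hmbi : ∀ a b : E, MinBalanced ε a b → Ranked (Set.Icc a b))
    (β γ : {x : E // x ≠ α})
    (hcomp : @SameComponent _ instF β γ)
    (hβ : α ⋖ (β : E)) (hγ : α ⋖ (γ : E))
    (ρ : {x : E // x ≠ α} → ℤ) (hρ : @IsRankFunction _ instF ρ) :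
    ρ β = ρ γ := by
  classical
  -- the order of `F` is the restriction of the order of `E`
  have hleF : ∀ x y : {x : E // x ≠ α}, instF.le x y ↔ (x : E) ≤ (y : E) := by
    intro x y
    rw [hFle]
    constructor
    · intro h
      induction h with
      | single h => exact h.1
      | tail _ h ih => exact le_trans ih h.1
    · intro h
      have ht : Relation.TransGen (fun u v : E => u ≤ v ∧ C (ε u) (ε v)) x.1 y.1 :=
        (hheap.2 _ _).mp h
      exact Relation.TransGen.head_induction_on
        (motive := fun a _ => ∀ ha : a ≠ α, Relation.TransGen
          (fun u v : {x : E // x ≠ α} => (u : E) ≤ (v : E) ∧ C (ε u) (ε v)) ⟨a, ha⟩ y) ht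
        (fun {a} h ha => Relation.TransGen.single ⟨h.1, h.2⟩)
        (fun {a c} h' ht' ih ha =>
          Relation.TransGen.head ⟨h'.1, h'.2⟩
            (ih (fun hc => ha (hαmin a (hc ▸ h'.1)))))
        x.2
  have hltF : ∀ x y : {x : E // x ≠ α},
      @LT.lt _ instF.toPreorder.toLT x y ↔ (x : E) < (y : E) := by
    intro x y
    rw [@lt_iff_le_not_ge _ instF.toPreorder x y, lt_iff_le_not_ge]
    constructor
    · rintro ⟨h1, h2⟩
      exact ⟨(hleF x y).mp h1, fun h => h2 ((hleF y x).mpr h)⟩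
    · rintro ⟨h1, h2⟩
      exact ⟨(hleF x y).mpr h1, fun h => h2 ((hleF y x).mp h)⟩
  -- covering relations in `F` are covering relations in `E`
  have hcovF : ∀ x y : {x : E // x ≠ α},
      @CovBy _ instF.toPreorder.toLT x y ↔ (x : E) ⋖ (y : E) := by
    intro x y
    constructor
    · rintro ⟨hlt, hmid⟩
      refine ⟨(hltF x y).mp hlt, ?_⟩
      intro z hz1 hz2
      have hzne : z ≠ α := by
        rintro rfl
        exact x.2 (hαmin _ hz1.le)
      exact hmid ((hltF x ⟨z, hzne⟩).mpr hz1) ((hltF ⟨z, hzne⟩ y).mpr hz2)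
    · rintro ⟨hlt, hmid⟩
      refine ⟨(hltF x y).mpr hlt, ?_⟩
      intro z hz1 hz2
      exact hmid ((hltF x z).mp hz1) ((hltF z y).mp hz2)
  have hρ' : ∀ (a b : E) (ha : a ≠ α) (hb : b ≠ α),
      a ⋖ b → ρ ⟨b, hb⟩ = ρ ⟨a, ha⟩ + 1 := by
    intro a b ha hb h
    exact hρ ⟨a, ha⟩ ⟨b, hb⟩ ((hcovF _ _).mpr h)
  have hcomp' : Relation.EqvGen
      (fun x y : {x : E // x ≠ α} => (x : E) ⋖ (y : E)) β γ :=
    Relation.EqvGen.mono (fun a b h => (hcovF a b).mp h) β γ hcomp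
  -- labels of covers of `α` are concurrent with the label of `α`
  have hCβ : C (ε α) (ε (β : E)) := aux_cov_concur C ε hheap hβ
  have hCγ : C (ε α) (ε (γ : E)) := aux_cov_concur C ε hheap hγ
  -- if the labels of β and γ are concurrent, then β = γ
  have key_eq : C (ε (β : E)) (ε (γ : E)) → β = γ := by
    intro h
    rcases hheap.1 _ _ h with hle | hle
    · rcases hle.lt_or_eq with hlt | he
      · exact absurd hlt (hγ.2 hβ.1)
      · exact Subtype.ext he
    · rcases hle.lt_or_eq with hlt | he
      · exact absurd hlt (hβ.2 hγ.1)
      · exact (Subtype.ext he).symm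
  by_cases hβγ : ε (β : E) = ε (γ : E)
  · exact congrArg ρ (key_eq (by rw [hβγ]; exact hrefl _))
  by_cases hβα : ε (β : E) = ε α
  · exact congrArg ρ (key_eq (by rw [hβα]; exact hCγ))
  by_cases hγα : ε (γ : E) = ε α
  · exact congrArg ρ (key_eq (by rw [hγα]; exact hsymm hCβ))
  -- main case: the three labels are pairwise distinct.
  -- Step 1: some element of F has the same label as α (uses acyclicity).
  have hexists : ∃ x : E, x ≠ α ∧ ε x = ε α := by
    by_contra hno
    push_neg at hno
    set G := SimpleGraph.fromRel (fun v w : Set.range ε => C v.1 w.1) with hG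
    have hvm : ∀ x : E, ε x ∈ Set.range ε := fun x => ⟨x, rfl⟩
    have hwalk : ∀ u v : {x : E // x ≠ α},
        Relation.EqvGen (fun x y : {x : E // x ≠ α} => (x : E) ⋖ (y : E)) u v →
        ∃ w : G.Walk ⟨ε (u : E), hvm _⟩ ⟨ε (v : E), hvm _⟩,
          ∀ s ∈ w.support, s.1 ≠ ε α := by
      intro u v h
      induction h with
      | rel a b hab =>
        have hC : C (ε (a : E)) (ε (b : E)) := aux_cov_concur C ε hheap hab
        rcases eq_or_ne (ε (a : E)) (ε (b : E)) with he | hne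
        · refine ⟨SimpleGraph.Walk.nil.copy rfl (Subtype.ext he), ?_⟩
          intro s hs
          rw [SimpleGraph.Walk.support_copy, SimpleGraph.Walk.support_nil] at hs
          simp only [List.mem_singleton] at hs
          subst hs
          exact hno a.1 a.2
        · have hadj : G.Adj ⟨ε (a : E), hvm _⟩ ⟨ε (b : E), hvm _⟩ := by
            rw [hG, SimpleGraph.fromRel_adj]
            exact ⟨fun hh => hne (congrArg Subtype.val hh), Or.inl hC⟩
          refine ⟨hadj.toWalk, ?_⟩
          intro s hs
          simp only [SimpleGraph.Adj.toWalk, SimpleGraph.Walk.support_cons,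
            SimpleGraph.Walk.support_nil, List.mem_cons, List.mem_singleton,
            List.not_mem_nil, or_false] at hs
          rcases hs with rfl | rfl
          · exact hno a.1 a.2
          · exact hno b.1 b.2
      | refl a =>
        refine ⟨SimpleGraph.Walk.nil, ?_⟩
        intro s hs
        rw [SimpleGraph.Walk.support_nil] at hs
        simp only [List.mem_singleton] at hs
        subst hs
        exact hno a.1 a.2
      | symm a b hab ih =>
        obtain ⟨w, hw⟩ := ih
        exact ⟨w.reverse, fun s hs => hw s
          (by rwa [SimpleGraph.Walk.support_reverse, List.mem_reverse] at hs)⟩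
      | trans a b c hab hbc ih1 ih2 =>
        obtain ⟨w1, hw1⟩ := ih1
        obtain ⟨w2, hw2⟩ := ih2
        refine ⟨w1.append w2, ?_⟩
        intro s hs
        rw [SimpleGraph.Walk.mem_support_append_iff] at hs
        rcases hs with hs | hs
        · exact hw1 s hs
        · exact hw2 s hs
    obtain ⟨w, hw⟩ := hwalk β γ hcomp'
    have hadj1 : G.Adj ⟨ε α, hvm α⟩ ⟨ε (β : E), hvm _⟩ := by
      rw [hG, SimpleGraph.fromRel_adj]
      exact ⟨fun h => hβα (congrArg Subtype.val h).symm, Or.inl hCβ⟩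
    have hadj2 : G.Adj ⟨ε α, hvm α⟩ ⟨ε (γ : E), hvm _⟩ := by
      rw [hG, SimpleGraph.fromRel_adj]
      exact ⟨fun h => hγα (congrArg Subtype.val h).symm, Or.inl hCγ⟩
    have hne1 : (⟨ε (β : E), hvm _⟩ : Set.range ε) ≠ ⟨ε α, hvm α⟩ :=
      fun h => hβα (congrArg Subtype.val h)
    have hne2 : (⟨ε α, hvm α⟩ : Set.range ε) ≠ ⟨ε (γ : E), hvm _⟩ :=
      fun h => hγα (congrArg Subtype.val h).symm
    have hne3 : (⟨ε (β : E), hvm _⟩ : Set.range ε) ≠ ⟨ε (γ : E), hvm _⟩ :=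
      fun h => hβγ (congrArg Subtype.val h)
    have hq : (SimpleGraph.Walk.cons hadj1.symm hadj2.toWalk).IsPath := by
      simp only [SimpleGraph.Adj.toWalk, SimpleGraph.Walk.isPath_def,
        SimpleGraph.Walk.support_cons, SimpleGraph.Walk.support_nil]
      simp [List.nodup_cons, hne1, hne2, hne3]
    have huniq := SimpleGraph.isAcyclic_iff_path_unique.mp hacyclic
    have heqp : (⟨SimpleGraph.Walk.cons hadj1.symm hadj2.toWalk, hq⟩ :
        G.Path ⟨ε (β : E), hvm _⟩ ⟨ε (γ : E), hvm _⟩) = w.toPath := huniq _ _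
    have hmem : (⟨ε α, hvm α⟩ : Set.range ε) ∈
        (w.toPath : G.Walk ⟨ε (β : E), hvm _⟩ ⟨ε (γ : E), hvm _⟩).support := by
      rw [← heqp]
      simp [SimpleGraph.Adj.toWalk, SimpleGraph.Walk.support_cons]
    exact hw _ (SimpleGraph.Walk.support_toPath_subset w hmem) rfl
  -- Step 2: pick δ' minimal with α < δ' and ε δ' = ε α
  obtain ⟨d0, hd0ne, hd0lab⟩ := hexists
  have hαd0 : α < d0 := by
    have hcd : C (ε α) (ε d0) := by rw [hd0lab]; exact hrefl _
    rcases hheap.1 _ _ hcd with h | h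
    · exact lt_of_le_of_ne h (Ne.symm hd0ne)
    · exact absurd (hαmin _ h) hd0ne
  have _i2 : WellFoundedLT E := Finite.to_wellFoundedLT
  obtain ⟨δ', hδ'S, hδ'min⟩ :=
    _i2.wf.has_min {x : E | α < x ∧ ε x = ε α} ⟨d0, hαd0, hd0lab⟩
  -- [α, δ'] is a minimal balanced subinterval, hence ranked
  have hMB : MinBalanced ε α δ' := by
    refine ⟨hδ'S.1, hδ'S.2.symm, ?_⟩
    intro c hc hclab
    rcases eq_or_ne c α with rfl | hcne
    · exact Or.inl rfl
    · right
      have hαc : α < c := lt_of_le_of_ne hc.1 (Ne.symm hcne)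
      rcases eq_or_ne c δ' with rfl | hne
      · rfl
      · exact absurd (lt_of_le_of_ne hc.2 hne) (hδ'min c ⟨hαc, hclab⟩)
  obtain ⟨σ, hσ⟩ := hmbi α δ' hMB
  -- β and γ lie strictly between α and δ'
  have hβδ : (β : E) < δ' := by
    have hc : C (ε (β : E)) (ε δ') := by rw [hδ'S.2]; exact hsymm hCβ
    rcases hheap.1 _ _ hc with h | h
    · rcases h.lt_or_eq with h | h
      · exact h
      · exfalso; apply hβα; rw [h]; exact hδ'S.2
    · rcases h.lt_or_eq with h | h
      · exact absurd h (hβ.2 hδ'S.1)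
      · exfalso; apply hβα; rw [← h]; exact hδ'S.2
  have hγδ : (γ : E) < δ' := by
    have hc : C (ε (γ : E)) (ε δ') := by rw [hδ'S.2]; exact hsymm hCγ
    rcases hheap.1 _ _ hc with h | h
    · rcases h.lt_or_eq with h | h
      · exact h
      · exfalso; apply hγα; rw [h]; exact hδ'S.2
    · rcases h.lt_or_eq with h | h
      · exact absurd h (hγ.2 hδ'S.1)
      · exfalso; apply hγα; rw [← h]; exact hδ'S.2
  -- covering relations in E inside [α, δ'] are covering relations of the interval
  have hσE : ∀ (u : E) (hu : u ∈ Set.Icc α δ') (v : E) (hv : v ∈ Set.Icc α δ'),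
      u ⋖ v → σ ⟨v, hv⟩ = σ ⟨u, hu⟩ + 1 := by
    intro u hu v hv h
    refine hσ ⟨u, hu⟩ ⟨v, hv⟩ ⟨Subtype.mk_lt_mk.mpr h.1, ?_⟩
    rintro ⟨z, hz⟩ h1 h2
    exact h.2 (Subtype.mk_lt_mk.mp h1) (Subtype.mk_lt_mk.mp h2)
  -- along a saturated chain in (α, δ'], ρ and σ change by the same amount
  have hchain : ∀ u v : E, Relation.TransGen (fun x y : E => x ⋖ y) u v →
      α < u → v ≤ δ' →
      ∀ (hu : u ≠ α) (hv : v ≠ α) (hu' : u ∈ Set.Icc α δ') (hv' : v ∈ Set.Icc α δ'),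
      ρ ⟨v, hv⟩ - ρ ⟨u, hu⟩ = σ ⟨v, hv'⟩ - σ ⟨u, hu'⟩ := by
    have hle : ∀ x y : E, Relation.TransGen (fun a b : E => a ⋖ b) x y → x ≤ y := by
      intro x y h
      induction h with
      | single h => exact h.le
      | tail _ h ih => exact ih.trans h.le
    intro u v h
    induction h with
    | single h1 =>
      intro hαu hvδ hu hv hu' hv'
      rw [hρ' u _ hu hv h1, hσE u hu' _ hv' h1]
      ring
    | @tail b c hT hcov ih =>
      intro hαu hcδ hu hv hu' hv'
      have hαb : α < b := lt_of_lt_of_le hαu (hle u b hT)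
      have hbδ : b ≤ δ' := hcov.lt.le.trans hcδ
      have hb' : b ∈ Set.Icc α δ' := ⟨hαb.le, hbδ⟩
      have e1 := ih hαu hbδ hu hαb.ne' hu' hb'
      have e2 : ρ ⟨c, hv⟩ = ρ ⟨b, hαb.ne'⟩ + 1 := hρ' b c hαb.ne' hv hcov
      have e3 : σ ⟨c, hv'⟩ = σ ⟨b, hb'⟩ + 1 := hσE b hb' c hv' hcov
      rw [e2, e3]
      linarith
  have hδ'ne : δ' ≠ α := hδ'S.1.ne'
  have hδ'Icc : δ' ∈ Set.Icc α δ' := ⟨hδ'S.1.le, le_refl _⟩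
  have hβIcc : (β : E) ∈ Set.Icc α δ' := ⟨hβ.1.le, hβδ.le⟩
  have hγIcc : (γ : E) ∈ Set.Icc α δ' := ⟨hγ.1.le, hγδ.le⟩
  have hαIcc : α ∈ Set.Icc α δ' := ⟨le_refl _, hδ'S.1.le⟩
  have eβ := hchain (β : E) δ' (aux_covChain _ _ hβδ) hβ.1 (le_refl δ')
    β.2 hδ'ne hβIcc hδ'Icc
  have eγ := hchain (γ : E) δ' (aux_covChain _ _ hγδ) hγ.1 (le_refl δ')
    γ.2 hδ'ne hγIcc hδ'Icc
  have s1 : σ ⟨(β : E), hβIcc⟩ = σ ⟨α, hαIcc⟩ + 1 := hσE α hαIcc _ hβIcc hβ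
  have s2 : σ ⟨(γ : E), hγIcc⟩ = σ ⟨α, hαIcc⟩ + 1 := hσE α hαIcc _ hγIcc hγ
  have hβeta : (⟨(β : E), β.2⟩ : {x : E // x ≠ α}) = β := rfl
  have hγeta : (⟨(γ : E), γ.2⟩ : {x : E // x ≠ α}) = γ := rfl
  rw [hβeta] at eβ
  rw [hγeta] at eγ
  linarith
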